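/- Suppose an extended type-aware chromosome has no two adjacent drone positions (i.e., it is feasible with respect to the single-visit-per-flight requirement) and its final position m carries a truck node. Then for every truck position i < m, the sets T(i) and T⁺(i) are not both empty. More precisely, if T(i) = ∅ then position i+1 is a drone position equal to d(i), position i+2 exists and is a truck position, and i+2 ∈ T⁺(i). Consequently the Bellman value C(i) of the Join dynamic program is finite for every state i. -/

import Mathlib

open scoped ENNReal NNReal

/-- Positions of the extended chromosome `E` carrying truck nodes (positive entries). -/
def truckPos (E : List ℤ) : Finset ℕ :=
  (Finset.range E.length).filter fun i => 0 < E.getD i 0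

/-- Positions of the extended chromosome `E` carrying drone nodes (negative entries). -/
def dronePos (E : List ℤ) : Finset ℕ :=
  (Finset.range E.length).filter fun i => E.getD i 0 < 0

/-- `d(i)`: the smallest drone position greater than `i`, if one exists. -/
def droneNext (E : List ℤ) (i : ℕ) : Option ℕ :=
  if h : ((dronePos E).filter fun j => i < j).Nonempty
  then some (((dronePos E).filter fun j => i < j).min' h)
  else none

/-- `T(i)`: the truck positions strictly between `i` and `d(i)`
(all truck positions greater than `i` when `d(i)` does not exist). -/
def Tset (E : List ℤ) (i : ℕ) : Finset ℕ :=
  match droneNext E i with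
  | some di => (truckPos E).filter fun j => i < j ∧ j < di
  | none => (truckPos E).filter fun j => i < j

/-- `T⁺(i)`: the truck positions strictly between `d(i)` and `d⁺(i)`
(all truck positions greater than `d(i)` when `d⁺(i)` does not exist),
and `∅` when `d(i)` does not exist. -/
def Tplus (E : List ℤ) (i : ℕ) : Finset ℕ :=
  match droneNext E i with
  | some di =>
      match droneNext E di with
      | some di' => (truckPos E).filter fun j => di < j ∧ j < di'
      | none => (truckPos E).filter fun j => di < j
  | none => ∅

/-- An extended type-aware chromosome for `n` customers: positions `0,…,n+1`, where
positions `0` and `n+1` carry truck depots (positive entries) and the entries in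
between have absolute values exactly `1,…,n`, each appearing once. -/
def IsExtChromosome (n : ℕ) (E : List ℤ) : Prop :=
  E.length = n + 2 ∧ 0 < E.getD 0 0 ∧ 0 < E.getD (n + 1) 0 ∧
    List.Perm (((E.drop 1).take n).map Int.natAbs) (List.range' 1 n)

lemma mem_truckPos' {E : List ℤ} {i : ℕ} :
    i ∈ truckPos E ↔ i < E.length ∧ 0 < E.getD i 0 := by
  simp [truckPos]

lemma mem_dronePos' {E : List ℤ} {i : ℕ} :
    i ∈ dronePos E ↔ i < E.length ∧ E.getD i 0 < 0 := by
  simp [dronePos]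

lemma truck_or_drone {n : ℕ} {E : List ℤ} (hE : IsExtChromosome n E) {i : ℕ}
    (hi : i < E.length) : i ∈ truckPos E ∨ i ∈ dronePos E := by
  obtain ⟨hlen, h0, hm, hperm⟩ := hE
  rcases lt_trichotomy (E.getD i 0) 0 with h | h | h
  · right; exact mem_dronePos'.mpr ⟨hi, h⟩
  · exfalso
    rcases Nat.eq_zero_or_pos i with rfl | hipos
    · omega
    have hin : i ≤ n + 1 := by omega
    rcases eq_or_lt_of_le hin with rfl | hilt
    · omega
    -- 1 ≤ i ≤ n
    set L := (E.drop 1).take n with hL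
    have hLlen : L.length = n := by simp [hL, hlen]
    have hidx : i - 1 < L.length := by omega
    have hget : L[i-1]'hidx = E[i]'(by omega) := by
      simp [hL]
      congr 1
      omega
    have hmem : (L[i-1]'hidx).natAbs ∈ L.map Int.natAbs := by
      exact List.mem_map_of_mem (List.getElem_mem hidx)
    have := hperm.mem_iff.mp hmem
    rw [List.mem_range'] at this
    have hz : E.getD i 0 = E[i]'(by omega) := List.getD_eq_getElem E 0 (by omega)
    rw [hz] at h
    rw [hget] at this
    omega
  · left; exact mem_truckPos'.mpr ⟨hi, h⟩
lemma droneNext_some' {E : List ℤ} {i di : ℕ} (h : droneNext E i = some di) :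
    di ∈ dronePos E ∧ i < di ∧ ∀ j ∈ dronePos E, i < j → di ≤ j := by
  unfold droneNext at h
  split_ifs at h with hne
  injection h with h
  subst h
  have hm := Finset.min'_mem _ hne
  rw [Finset.mem_filter] at hm
  refine ⟨hm.1, hm.2, fun j hj hij => Finset.min'_le _ _ (Finset.mem_filter.mpr ⟨hj, hij⟩)⟩

lemma droneNext_none' {E : List ℤ} {i : ℕ} (h : droneNext E i = none) :
    ∀ j ∈ dronePos E, ¬ i < j := by
  unfold droneNext at h
  split_ifs at h with hne
  intro j hj hij
  exact hne ⟨j, Finset.mem_filter.mpr ⟨hj, hij⟩⟩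

lemma droneNext_eq_of_mem {E : List ℤ} {i : ℕ} (h : i + 1 ∈ dronePos E) :
    droneNext E i = some (i + 1) := by
  have hne : ((dronePos E).filter fun j => i < j).Nonempty :=
    ⟨i + 1, Finset.mem_filter.mpr ⟨h, by omega⟩⟩
  unfold droneNext
  rw [dif_pos hne]
  congr 1
  have h1 : ((dronePos E).filter fun j => i < j).min' hne ≤ i + 1 :=
    Finset.min'_le _ _ (Finset.mem_filter.mpr ⟨h, by omega⟩)
  have h2 := Finset.min'_mem _ hne
  rw [Finset.mem_filter] at h2
  omega

lemma truck_not_drone {E : List ℤ} {i : ℕ} (h : i ∈ truckPos E) : i ∉ dronePos E := by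
  simp only [truckPos, dronePos, Finset.mem_filter] at *
  omega

lemma mem_Tset_union_Tplus {E : List ℤ} {i k : ℕ}
    (hk : k ∈ Tset E i ∪ Tplus E i) : k ∈ truckPos E ∧ i < k := by
  rw [Finset.mem_union] at hk
  rcases hk with hk | hk
  · unfold Tset at hk
    rcases h : droneNext E i with _ | di <;> rw [h] at hk <;>
      simp only [Finset.mem_filter] at hk
    · exact ⟨hk.1, hk.2⟩
    · exact ⟨hk.1, hk.2.1⟩
  · unfold Tplus at hk
    rcases h : droneNext E i with _ | di <;> rw [h] at hk
    · simp at hk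
    · have hdi := (droneNext_some' h).2.1
      dsimp only at hk
      rcases h2 : droneNext E di with _ | di' <;> rw [h2] at hk <;>
        simp only [Finset.mem_filter] at hk
      · exact ⟨hk.1, by omega⟩
      · exact ⟨hk.1, by omega⟩

lemma key_lemma {n : ℕ} {E : List ℤ} (hE : IsExtChromosome n E)
    (hfeas : ∀ i, ¬(i ∈ dronePos E ∧ i + 1 ∈ dronePos E)) {i : ℕ}
    (hi : i ∈ truckPos E) (hlt : i < n + 1) :
    (i + 1 ∈ truckPos E ∧ i + 1 ∈ Tset E i) ∨
    (i + 1 ∈ dronePos E ∧ droneNext E i = some (i + 1) ∧ i + 2 ≤ n + 1 ∧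
      i + 2 ∈ truckPos E ∧ i + 2 ∈ Tplus E i) := by
  have hlen := hE.1
  have h1lt : i + 1 < E.length := by omega
  rcases truck_or_drone hE h1lt with ht | hd
  · left
    refine ⟨ht, ?_⟩
    unfold Tset
    rcases h : droneNext E i with _ | di <;> dsimp only
    · exact Finset.mem_filter.mpr ⟨ht, by omega⟩
    · obtain ⟨hdd, hdi, -⟩ := droneNext_some' h
      have hne : di ≠ i + 1 := fun he => truck_not_drone ht (he ▸ hdd)
      exact Finset.mem_filter.mpr ⟨ht, by omega, by omega⟩
  · right
    have hdn := droneNext_eq_of_mem hd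
    have hm_truck : (n + 1) ∈ truckPos E := mem_truckPos'.mpr ⟨by omega, hE.2.2.1⟩
    have hne1 : i + 1 ≠ n + 1 := fun he => truck_not_drone hm_truck (he ▸ hd)
    have hle2 : i + 2 ≤ n + 1 := by omega
    have h2lt : i + 2 < E.length := by omega
    have ht2 : i + 2 ∈ truckPos E := by
      rcases truck_or_drone hE h2lt with h | h
      · exact h
      · exact absurd ⟨hd, h⟩ (hfeas (i + 1))
    refine ⟨hd, hdn, hle2, ht2, ?_⟩
    unfold Tplus
    rw [hdn]; dsimp only
    rcases h2 : droneNext E (i + 1) with _ | di' <;> dsimp only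
    · exact Finset.mem_filter.mpr ⟨ht2, by omega⟩
    · obtain ⟨hdd', hdi', -⟩ := droneNext_some' h2
      have hne : di' ≠ i + 2 := fun he => truck_not_drone ht2 (he ▸ hdd')
      exact Finset.mem_filter.mpr ⟨ht2, by omega, by omega⟩

/-- For a feasible extended type-aware chromosome (no two adjacent drone positions)
whose final position `m = n+1` carries a truck node, for every truck position `i < m`
the sets `T(i)` and `T⁺(i)` are not both empty; more precisely, if `T(i) = ∅` then
position `i+1` is a drone position equal to `d(i)`, position `i+2` exists and is a
truck position, and `i+2 ∈ T⁺(i)`.  Consequently, any Bellman value `C` of the Join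
dynamic program is finite at every state. -/
theorem feasible_chromosome_no_dead_end (n : ℕ) (E : List ℤ)
    (hE : IsExtChromosome n E)
    (hfeas : ∀ i, ¬(i ∈ dronePos E ∧ i + 1 ∈ dronePos E)) :
    (∀ i ∈ truckPos E, i < n + 1 →
      ¬(Tset E i = ∅ ∧ Tplus E i = ∅) ∧
      (Tset E i = ∅ →
        i + 1 ∈ dronePos E ∧ droneNext E i = some (i + 1) ∧
        i + 2 ≤ n + 1 ∧ i + 2 ∈ truckPos E ∧ i + 2 ∈ Tplus E i)) ∧
    (∀ (c : ℕ → ℕ → ℝ≥0) (C : ℕ → ℝ≥0∞),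
      C (n + 1) = 0 →
      (∀ i ∈ truckPos E, i < n + 1 →
        C i = ⨅ k ∈ Tset E i ∪ Tplus E i, (((c i k : ℝ≥0) : ℝ≥0∞) + C k)) →
      ∀ i ∈ truckPos E, C i < ⊤) := by
  have hlen := hE.1
  constructor
  · intro i hi hlt
    rcases key_lemma hE hfeas hi hlt with ⟨ht, hts⟩ | ⟨hd, hdn, hle, ht2, htp⟩
    · constructor
      · rintro ⟨he, -⟩
        rw [he] at hts
        exact absurd hts (Finset.notMem_empty _)
      · intro he
        rw [he] at hts
        exact absurd hts (Finset.notMem_empty _)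
    · constructor
      · rintro ⟨-, he⟩
        rw [he] at htp
        exact absurd htp (Finset.notMem_empty _)
      · intro _
        exact ⟨hd, hdn, hle, ht2, htp⟩
  · intro c C h0 hrec
    suffices H : ∀ d i, i ∈ truckPos E → n + 1 ≤ i + d → C i < ⊤ by
      intro i hi
      exact H (n + 1) i hi (by omega)
    intro d
    induction d with
    | zero =>
      intro i hi hle
      have hi2 := mem_truckPos'.mp hi
      have : i = n + 1 := by omega
      subst this
      rw [h0]
      simp
    | succ d ih =>
      intro i hi hle
      by_cases hcase : i = n + 1
      · subst hcase
        rw [h0]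
        simp
      · have hi2 := mem_truckPos'.mp hi
        have hlt : i < n + 1 := by omega
        have hex : ∃ k, k ∈ Tset E i ∪ Tplus E i := by
          rcases key_lemma hE hfeas hi hlt with ⟨-, hts⟩ | ⟨-, -, -, -, htp⟩
          · exact ⟨i + 1, Finset.mem_union_left _ hts⟩
          · exact ⟨i + 2, Finset.mem_union_right _ htp⟩
        obtain ⟨k, hk⟩ := hex
        obtain ⟨hkt, hik⟩ := mem_Tset_union_Tplus hk
        rw [hrec i hi hlt]
        refine lt_of_le_of_lt (iInf₂_le k hk) ?_
        exact ENNReal.add_lt_top.mpr ⟨ENNReal.coe_lt_top, ih k hkt (by omega)⟩
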